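/- Let (G,E) be a contracting self-similar groupoid action on a finite directed graph E. Then asymptotic equivalence is a closed equivalence relation on the compact metric space E^{-∞}, and the limit space J = E^{-∞}/∼ with the quotient topology is compact and metrizable. -/

import Mathlib

/-!
Self-similar groupoid actions on finite directed graphs, following
Brownlowe–Buss–Gonçalves–Hume–Sims–Whittaker,
"KK-duality for self-similar groupoid actions on graphs".

A directed graph is given by a vertex type `V`, an edge type `E` and
range/source maps `rE sE : E → V`.  A finite path is modelled as a list of
edges together with a base vertex (its range): the list `[e₁, …, eₙ]` is the
path `e₁ … eₙ` read from left to right, so consecutive edges satisfy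
`sE eᵢ = rE eᵢ₊₁`.  The groupoid of a self-similar action, its partial
multiplication, the action on finite paths and the restriction maps are
modelled as total functions whose values are only constrained (by the axioms
of the structure `SSA`) on their natural domains.
-/

universe u

namespace SSG

variable {V E : Type u}

/-- `l` is a trail: the source of each edge is the range of the next. -/
def IsTrail (rE sE : E → V) (l : List E) : Prop :=
  List.Chain' (fun e f => sE e = rE f) l

/-- `FromV rE sE v l` : `l` is a finite path whose range (leftmost vertex) is `v`. -/
def FromV (rE sE : E → V) (v : V) (l : List E) : Prop :=
  IsTrail rE sE l ∧ ∀ e, l.head? = some e → rE e = v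

/-- The source (rightmost vertex) of the finite path `l` with range `v`. -/
def trailSrc (sE : E → V) (v : V) (l : List E) : V :=
  l.getLast?.elim v sE

/-- A (faithful) self-similar groupoid action `(G, E)` on the directed graph with
vertices `V`, edges `E`, range map `rE` and source map `sE`.  Here `d`/`c` are
the domain/codomain maps of the groupoid `G` (its units are `unit v` for
`v : V`), `mul h g` is the composite `h ∘ g` (junk unless `d h = c g`),
`act g l` is `g · l` for finite paths `l` with range `d g` (junk otherwise)
and `res g l` is the restriction `g|_l` (junk otherwise). -/
structure SSA (V E : Type u) (rE sE : E → V) : Type (u + 1) where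
  G : Type u
  d : G → V
  c : G → V
  mul : G → G → G
  inv : G → G
  unit : V → G
  act : G → List E → List E
  res : G → List E → G
  d_unit : ∀ v, d (unit v) = v
  c_unit : ∀ v, c (unit v) = v
  d_mul : ∀ g h, d h = c g → d (mul h g) = d g
  c_mul : ∀ g h, d h = c g → c (mul h g) = c h
  mul_assoc : ∀ g h k, d h = c g → d k = c h → mul k (mul h g) = mul (mul k h) g
  unit_mul : ∀ g, mul (unit (c g)) g = g
  mul_unit : ∀ g, mul g (unit (d g)) = g
  d_inv : ∀ g, d (inv g) = c g
  c_inv : ∀ g, c (inv g) = d g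
  inv_mul : ∀ g, mul (inv g) g = unit (d g)
  mul_inv : ∀ g, mul g (inv g) = unit (c g)
  act_fromV : ∀ g l, FromV rE sE (d g) l → FromV rE sE (c g) (act g l)
  act_length : ∀ g l, FromV rE sE (d g) l → (act g l).length = l.length
  act_unit : ∀ v l, FromV rE sE v l → act (unit v) l = l
  act_mul : ∀ g h l, d h = c g → FromV rE sE (d g) l →
    act (mul h g) l = act h (act g l)
  faithful : ∀ g h, d g = d h → c g = c h →
    (∀ l, FromV rE sE (d g) l → act g l = act h l) → g = h
  res_nil : ∀ g, res g [] = g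
  d_res : ∀ g l, FromV rE sE (d g) l → d (res g l) = trailSrc sE (d g) l
  c_res : ∀ g l, FromV rE sE (d g) l → c (res g l) = trailSrc sE (c g) (act g l)
  res_append : ∀ g l m, FromV rE sE (d g) l →
    FromV rE sE (trailSrc sE (d g) l) m → res g (l ++ m) = res (res g l) m
  act_append : ∀ g l m, FromV rE sE (d g) l →
    FromV rE sE (trailSrc sE (d g) l) m →
    act g (l ++ m) = act g l ++ act (res g l) m

variable {rE sE : E → V}

/-- `F` is a contracting core for the self-similar groupoid action `A`. -/
def SSA.IsCore (A : SSA V E rE sE) (F : Set A.G) : Prop :=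
  F.Finite ∧ ∀ g : A.G, ∃ n : ℕ, ∀ l : List E,
    FromV rE sE (A.d g) l → l.length = n → A.res g l ∈ F

/-- The action is contracting if it admits a contracting core. -/
def SSA.Contracting (A : SSA V E rE sE) : Prop :=
  ∃ F : Set A.G, A.IsCore F

/-- The nucleus: the intersection of all contracting cores. -/
def SSA.nucleus (A : SSA V E rE sE) : Set A.G :=
  ⋂₀ {F : Set A.G | A.IsCore F}

/-- The action is recurrent. -/
def SSA.Recurrent (A : SSA V E rE sE) : Prop :=
  ∀ e f : E, ∀ h : A.G, A.d h = sE e → A.c h = sE f →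
    ∃ g : A.G, A.d g = rE e ∧ A.act g [e] = [f] ∧ A.res g [e] = h

/-- The action is level-transitive: any two paths of the same length lie in
one orbit. -/
def SSA.LevelTransitive (A : SSA V E rE sE) : Prop :=
  ∀ (v w : V) (l m : List E), FromV rE sE v l → FromV rE sE w m →
    l.length = m.length → ∃ g : A.G, A.d g = v ∧ A.c g = w ∧ A.act g l = m

/-- Every element of the groupoid is a finite composable product of
elements of `H`. -/
def SSA.GeneratedBy (A : SSA V E rE sE) (H : Set A.G) : Prop :=
  ∀ g : A.G, ∃ (h : A.G) (t : List A.G), h ∈ H ∧ (∀ k ∈ t, k ∈ H) ∧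
    List.Chain' (fun a b => A.d a = A.c b) (h :: t) ∧ t.foldl A.mul h = g

/-- The groupoid of the action is finitely generated. -/
def SSA.FinitelyGenerated (A : SSA V E rE sE) : Prop :=
  ∃ H : Set A.G, H.Finite ∧ A.GeneratedBy H

/-- The graph has no sources: every vertex receives an edge. -/
def NoSources (rE : E → V) : Prop := ∀ v : V, ∃ e : E, rE e = v

/-- The graph has no sinks: every vertex emits an edge. -/
def NoSinks (sE : E → V) : Prop := ∀ v : V, ∃ e : E, sE e = v

/-- The graph is strongly connected: it has an edge, and any ordered pair of
vertices is joined by a finite path. -/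
def StronglyConnected (rE sE : E → V) : Prop :=
  Nonempty E ∧ ∀ v w : V, ∃ l : List E, FromV rE sE v l ∧ trailSrc sE v l = w

/-- Right-infinite paths `y₁ y₂ y₃ …` (here `y k` is the edge `y_{k+1}`). -/
def RightPath (rE sE : E → V) : Type u :=
  {y : ℕ → E // ∀ k, sE (y k) = rE (y (k + 1))}

/-- The initial segment `y₁ … yₙ` of a right-infinite path. -/
def RightPath.trunc (y : RightPath rE sE) (n : ℕ) : List E :=
  (List.range n).map y.1

/-- The action is regular: whenever `g` fixes a right-infinite path `y`
(equivalently, all its initial segments), `g` acts trivially on some cylinder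
neighbourhood of `y`: some initial segment `μ` of `y` satisfies `g·μ = μ` and
`g|_μ = s(μ)`. -/
def SSA.Regular (A : SSA V E rE sE) : Prop :=
  ∀ (g : A.G) (y : RightPath rE sE), A.d g = rE (y.1 0) →
    (∀ n : ℕ, A.act g (y.trunc n) = y.trunc n) →
    ∃ n : ℕ, A.act g (y.trunc n) = y.trunc n ∧
      A.res g (y.trunc n) = A.unit (trailSrc sE (A.d g) (y.trunc n))

/-- Left-infinite paths `… x₋₂ x₋₁` (here `x k` is the edge `x_{-(k+1)}`). -/
def LeftPath (rE sE : E → V) : Type u :=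
  {x : ℕ → E // ∀ k, sE (x (k + 1)) = rE (x k)}

instance [TopologicalSpace E] : TopologicalSpace (LeftPath rE sE) :=
  inferInstanceAs (TopologicalSpace {x : ℕ → E // ∀ k, sE (x (k + 1)) = rE (x k)})

/-- The finite path `x₋ₘ … x₋₁`. -/
def LeftPath.trunc (x : LeftPath rE sE) (m : ℕ) : List E :=
  ((List.range m).reverse).map x.1

/-- The shift on left-infinite paths, deleting the rightmost edge. -/
def LeftPath.shift (x : LeftPath rE sE) : LeftPath rE sE :=
  ⟨fun k => x.1 (k + 1), fun k => x.2 (k + 1)⟩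

/-- Asymptotic equivalence of left-infinite paths: some sequence `(gₙ)` in the
groupoid with finitely many distinct values satisfies
`gₙ · (xₙ … x₋₁) = yₙ … y₋₁` for all `n < 0`. -/
def SSA.AsympEq (A : SSA V E rE sE) (x y : LeftPath rE sE) : Prop :=
  ∃ g : ℕ → A.G, (Set.range g).Finite ∧
    (∀ m : ℕ, A.d (g m) = rE (x.1 m)) ∧
    (∀ m : ℕ, A.act (g m) (x.trunc (m + 1)) = y.trunc (m + 1))

/-- The cylinder set `Z(l]` of left-infinite paths ending in `l`. -/
def cylL (rE sE : E → V) (l : List E) : Set (LeftPath rE sE) :=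
  {x : LeftPath rE sE | x.trunc l.length = l}

/-- The basic subset `U_l` of the limit space attached to a finite path `l`
with range `v`. -/
def SSA.limitU (A : SSA V E rE sE) (v : V) (l : List E) :
    Set (Quot A.AsympEq) :=
  {z : Quot A.AsympEq | ∀ x : LeftPath rE sE, Quot.mk A.AsympEq x = z →
    ∃ g ∈ A.nucleus, A.d g = v ∧ x ∈ cylL rE sE (A.act g l)}

/-- Bi-infinite paths `… x₋₁ x₀ x₁ …`. -/
def BiPath (rE sE : E → V) : Type u :=
  {x : ℤ → E // ∀ k : ℤ, sE (x k) = rE (x (k + 1))}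

instance [TopologicalSpace E] : TopologicalSpace (BiPath rE sE) :=
  inferInstanceAs (TopologicalSpace {x : ℤ → E // ∀ k : ℤ, sE (x k) = rE (x (k + 1))})

/-- The finite segment `xₙ x_{n+1} … x_{n+m-1}` of a bi-infinite path. -/
def BiPath.seg (x : BiPath rE sE) (n : ℤ) (m : ℕ) : List E :=
  (List.range m).map fun i => x.1 (n + i)

/-- Asymptotic equivalence of bi-infinite paths: some sequence `(gₙ)_{n ∈ ℤ}`
with finitely many distinct values satisfies
`gₙ · (xₙ x_{n+1} …) = yₙ y_{n+1} …` for all `n`. -/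
def SSA.AsympEqZ (A : SSA V E rE sE) (x y : BiPath rE sE) : Prop :=
  ∃ g : ℤ → A.G, (Set.range g).Finite ∧
    (∀ n : ℤ, A.d (g n) = rE (x.1 n)) ∧
    (∀ (n : ℤ) (m : ℕ), A.act (g n) (x.seg n m) = y.seg n m)

/-- The left-infinite path `x(-∞, n) = … x_{n-1} xₙ` of a bi-infinite path. -/
def BiPath.tail (x : BiPath rE sE) (n : ℤ) : LeftPath rE sE :=
  ⟨fun k => x.1 (n - k), by
    intro k
    have h := x.2 (n - ((k : ℤ) + 1))
    have h2 : n - ((k : ℤ) + 1) + 1 = n - (k : ℤ) := by ring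
    have h3 : (n - ((k + 1 : ℕ) : ℤ)) = n - ((k : ℤ) + 1) := by push_cast; ring
    show sE (x.1 (n - ((k + 1 : ℕ) : ℤ))) = rE (x.1 (n - (k : ℤ)))
    rw [h3, ← h2]
    exact h⟩

/-- The translation `τ` on bi-infinite paths, `(τ x)ₙ = x_{n-1}`. -/
def BiPath.translate (x : BiPath rE sE) : BiPath rE sE :=
  ⟨fun m => x.1 (m - 1), by
    intro k
    have h := x.2 (k - 1)
    have h2 : (k - 1 + 1 : ℤ) = k + 1 - 1 := by ring
    rw [h2] at h
    exact h⟩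

/-- The shift homeomorphism `σ̃_∞` on the inverse limit `lim← (J, T)`. -/
def solShift {J : Type*} (T : J → J)
    (z : {z : ℕ → J // ∀ n, T (z (n + 1)) = z n}) :
    {z : ℕ → J // ∀ n, T (z (n + 1)) = z n} :=
  ⟨fun n => match n with
    | 0 => T (z.1 0)
    | m + 1 => z.1 m,
   fun n => match n with
    | 0 => rfl
    | m + 1 => z.2 m⟩

/-- The distance function of a bundled metric space. -/
def mdist {Y : Type*} (m : MetricSpace Y) (a b : Y) : ℝ := by
  letI := m; exact dist a b

/-- The open ball of a bundled metric space. -/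
def mball {Y : Type*} (m : MetricSpace Y) (a : Y) (r : ℝ) : Set Y := by
  letI := m; exact Metric.ball a r

/-- The topology induced by a bundled metric space. -/
def mtop {Y : Type*} (m : MetricSpace Y) : TopologicalSpace Y := by
  letI := m; exact inferInstance


lemma fromV_nil (v : V) : FromV rE sE v [] := ⟨List.isChain_nil, by simp⟩

lemma trailSrc_singleton (v : V) (e : E) : trailSrc sE v [e] = sE e := by
  simp [trailSrc]

lemma fromV_cons (v : V) (e : E) (l : List E) :
    FromV rE sE v (e :: l) ↔ rE e = v ∧ FromV rE sE (sE e) l := by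
  constructor
  · rintro ⟨h1, h2⟩
    rw [IsTrail, List.Chain', List.isChain_cons] at h1
    refine ⟨h2 e rfl, h1.2, ?_⟩
    intro f hf
    exact (h1.1 f hf).symm
  · rintro ⟨h0, h1, h2⟩
    constructor
    · rw [IsTrail, List.Chain', List.isChain_cons]
      exact ⟨fun f hf => (h2 f hf).symm, h1⟩
    · intro f hf
      simp at hf
      rw [← hf]; exact h0

lemma fromV_append (v : V) (l m : List E) :
    FromV rE sE v (l ++ m) ↔ FromV rE sE v l ∧ FromV rE sE (trailSrc sE v l) m := by
  induction l generalizing v with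
  | nil => simp [fromV_nil, trailSrc]
  | cons e l ih =>
    rw [List.cons_append, fromV_cons, fromV_cons, ih, and_assoc]
    have : trailSrc sE v (e :: l) = trailSrc sE (sE e) l := by
      rcases l.eq_nil_or_concat with rfl | ⟨l', f, rfl⟩
      · simp [trailSrc]
      · simp only [trailSrc, List.concat_eq_append, ← List.cons_append,
          List.getLast?_concat, Option.elim]
    rw [this]

lemma trunc_length (x : LeftPath rE sE) (n : ℕ) : (x.trunc n).length = n := by
  simp [LeftPath.trunc]

lemma trunc_succ (x : LeftPath rE sE) (n : ℕ) : x.trunc (n + 1) = x.1 n :: x.trunc n := by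
  simp [LeftPath.trunc, List.range_succ]

lemma fromV_trunc (x : LeftPath rE sE) (n : ℕ) :
    FromV rE sE (rE (x.1 n)) (x.trunc (n + 1)) := by
  induction n with
  | zero => rw [trunc_succ]; exact (fromV_cons _ _ _).mpr ⟨rfl, fromV_nil _⟩
  | succ n ih =>
    rw [trunc_succ]
    exact (fromV_cons _ _ _).mpr ⟨rfl, by rw [x.2 n]; exact ih⟩

lemma cg_eq (A : SSA V E rE sE) (x y : LeftPath rE sE) (m : ℕ) (g : A.G)
    (hd : A.d g = rE (x.1 m))
    (hact : A.act g (x.trunc (m + 1)) = y.trunc (m + 1)) :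
    A.c g = rE (y.1 m) := by
  have h1 : FromV rE sE (A.d g) (x.trunc (m + 1)) := by
    rw [hd]; exact fromV_trunc x m
  have h2 := A.act_fromV g _ h1
  rw [hact] at h2
  exact (h2.2 (y.1 m) (by rw [trunc_succ]; rfl)).symm

lemma descend (A : SSA V E rE sE) (x y : LeftPath rE sE) (m : ℕ) :
    ∀ (k : ℕ) (g : A.G), A.d g = rE (x.1 (m + k)) →
      A.act g (x.trunc (m + k + 1)) = y.trunc (m + k + 1) →
      ∃ l, FromV rE sE (A.d g) l ∧ l.length = k ∧
        A.d (A.res g l) = rE (x.1 m) ∧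
        A.act (A.res g l) (x.trunc (m + 1)) = y.trunc (m + 1) := by
  intro k
  induction k with
  | zero =>
    intro g hd hact
    exact ⟨[], fromV_nil _, rfl, by rw [A.res_nil]; exact hd,
      by rw [A.res_nil]; exact hact⟩
  | succ k ih =>
    intro g hd hact
    have hmk : m + (k + 1) = m + k + 1 := rfl
    rw [hmk] at hd hact
    set e := x.1 (m + k + 1) with he
    have hFe : FromV rE sE (A.d g) [e] := (fromV_cons _ _ _).mpr ⟨hd.symm, fromV_nil _⟩
    have htr : trailSrc sE (A.d g) [e] = sE e := trailSrc_singleton _ _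
    have hse : sE e = rE (x.1 (m + k)) := x.2 (m + k)
    have hFt : FromV rE sE (trailSrc sE (A.d g) [e]) (x.trunc (m + k + 1)) := by
      rw [htr, hse]; exact fromV_trunc x (m + k)
    have happ : A.act g (e :: x.trunc (m + k + 1)) =
        A.act g [e] ++ A.act (A.res g [e]) (x.trunc (m + k + 1)) := by
      rw [← List.singleton_append]
      exact A.act_append g [e] _ hFe hFt
    have key : A.act g [e] ++ A.act (A.res g [e]) (x.trunc (m + k + 1)) =
        y.1 (m + k + 1) :: y.trunc (m + k + 1) := by
      rw [← happ, ← trunc_succ x (m + k + 1), ← trunc_succ y (m + k + 1)]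
      exact hact
    have hlen1 : (A.act g [e]).length = 1 := A.act_length g [e] hFe
    obtain ⟨f, hf⟩ := List.length_eq_one_iff.mp hlen1
    rw [hf] at key
    simp only [List.singleton_append, List.cons.injEq] at key
    have hd' : A.d (A.res g [e]) = rE (x.1 (m + k)) := by
      rw [A.d_res g [e] hFe, htr, hse]
    obtain ⟨l', hl1, hl2, hl3, hl4⟩ := ih (A.res g [e]) hd' key.2
    have hd2 : A.d (A.res g [e]) = sE e := by rw [A.d_res g [e] hFe, htr]
    have hFl' : FromV rE sE (sE e) l' := by rw [← hd2]; exact hl1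
    have hres : A.res g (e :: l') = A.res (A.res g [e]) l' := by
      rw [← List.singleton_append]
      exact A.res_append g [e] l' hFe (by rw [htr]; exact hFl')
    refine ⟨e :: l', (fromV_cons _ _ _).mpr ⟨hd.symm, hFl'⟩, by simp [hl2], ?_, ?_⟩
    · rw [hres]; exact hl3
    · rw [hres]; exact hl4

lemma res_reach (A : SSA V E rE sE) (F : Set A.G) (n : A.G → ℕ)
    (hn : ∀ g l, FromV rE sE (A.d g) l → l.length = n g → A.res g l ∈ F)
    (g : A.G) (l : List E) (hF : FromV rE sE (A.d g) l) (hle : n g ≤ l.length) :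
    ∃ f ∈ F, ∃ l₂, FromV rE sE (A.d f) l₂ ∧ l₂.length = l.length - n g ∧
      A.res f l₂ = A.res g l := by
  have hsplit : l = l.take (n g) ++ l.drop (n g) := (l.take_append_drop _).symm
  have h12 := (fromV_append (A.d g) (l.take (n g)) (l.drop (n g))).mp
    (by rw [← hsplit]; exact hF)
  have hlen : (l.take (n g)).length = n g := by
    rw [List.length_take]; exact min_eq_left hle
  have hfF : A.res g (l.take (n g)) ∈ F := hn g _ h12.1 hlen
  have hd : A.d (A.res g (l.take (n g))) = trailSrc sE (A.d g) (l.take (n g)) :=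
    A.d_res g _ h12.1
  refine ⟨_, hfF, l.drop (n g), by rw [hd]; exact h12.2, by simp, ?_⟩
  rw [← A.res_append g _ _ h12.1 h12.2, l.take_append_drop]

lemma restr_mem (A : SSA V E rE sE) (F : Set A.G) (n : A.G → ℕ)
    (hn : ∀ g l, FromV rE sE (A.d g) l → l.length = n g → A.res g l ∈ F)
    (F2 : Set A.G) (hF2a : F ⊆ F2)
    (hF2b : ∀ f ∈ F, ∀ e : E, FromV rE sE (A.d f) [e] → A.res f [e] ∈ F2)
    (N : ℕ) (hN1 : 1 ≤ N) (hNn : ∀ h ∈ F2, n h < N) :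
    ∀ (L : ℕ) (h : A.G), h ∈ F2 → ∀ l, FromV rE sE (A.d h) l → l.length = L →
      ∃ h' ∈ F2, ∃ l', FromV rE sE (A.d h') l' ∧ l'.length ≤ N ∧
        A.res h' l' = A.res h l := by
  intro L
  induction L using Nat.strong_induction_on with
  | _ L ih =>
    intro h hh l hFl hlen
    by_cases hLN : L ≤ N
    · exact ⟨h, hh, l, hFl, by rw [hlen]; exact hLN, rfl⟩
    push_neg at hLN
    rcases Nat.eq_zero_or_pos (n h) with h0 | hpos
    · have hhF : h ∈ F := by
        have := hn h [] (fromV_nil _) (by simp [h0])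
        rwa [A.res_nil] at this
      cases l with
      | nil => simp at hlen; omega
      | cons e l' =>
        have hc := (fromV_cons (A.d h) e l').mp hFl
        have hFe : FromV rE sE (A.d h) [e] := (fromV_cons _ _ _).mpr ⟨hc.1, fromV_nil _⟩
        have hmem : A.res h [e] ∈ F2 := hF2b h hhF e hFe
        have hd2 : A.d (A.res h [e]) = sE e := by
          rw [A.d_res h [e] hFe, trailSrc_singleton]
        have hFl' : FromV rE sE (A.d (A.res h [e])) l' := by rw [hd2]; exact hc.2
        have hres : A.res h (e :: l') = A.res (A.res h [e]) l' := by
          rw [← List.singleton_append]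
          exact A.res_append h [e] l' hFe
            (by rw [trailSrc_singleton]; exact hc.2)
        have hlt : l'.length < L := by simp at hlen; omega
        obtain ⟨h', H1, l'', H2, H3, H4⟩ := ih l'.length hlt (A.res h [e]) hmem l' hFl' rfl
        exact ⟨h', H1, l'', H2, H3, by rw [H4, hres]⟩
    · have hnh := hNn h hh
      obtain ⟨f, hfF, l₂, G1, G2, G3⟩ := res_reach A F n hn h l hFl (by omega)
      have hlt : l₂.length < L := by rw [G2]; omega
      obtain ⟨h', H1, l'', H2, H3, H4⟩ := ih l₂.length hlt f (hF2a hfF) l₂ G1 rfl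
      exact ⟨h', H1, l'', H2, H3, by rw [H4, G3]⟩

lemma isClosed_level (A : SSA V E rE sE) [TopologicalSpace E] [DiscreteTopology E]
    (m : ℕ) (h : A.G) :
    IsClosed {p : LeftPath rE sE × LeftPath rE sE |
      A.d h = rE (p.1.1 m) ∧ A.act h (p.1.trunc (m + 1)) = p.2.trunc (m + 1)} := by
  have htr : ∀ z : LeftPath rE sE, z.trunc (m + 1) =
      ((List.finRange (m + 1)).reverse).map (fun i : Fin (m + 1) => z.1 i.val) := by
    intro z
    show (List.range (m + 1)).reverse.map z.1 = _
    rw [← List.map_coe_finRange_eq_range (n := m + 1), ← List.map_reverse, List.map_map]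
    rfl
  have hset : {p : LeftPath rE sE × LeftPath rE sE |
        A.d h = rE (p.1.1 m) ∧ A.act h (p.1.trunc (m + 1)) = p.2.trunc (m + 1)} =
      (fun p : LeftPath rE sE × LeftPath rE sE =>
        ((p.1.1 m, fun i : Fin (m + 1) => p.1.1 i.val, fun i : Fin (m + 1) => p.2.1 i.val) :
          E × (Fin (m + 1) → E) × (Fin (m + 1) → E))) ⁻¹'
      {q : E × (Fin (m + 1) → E) × (Fin (m + 1) → E) |
        A.d h = rE q.1 ∧
        A.act h (((List.finRange (m + 1)).reverse).map q.2.1) =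
          ((List.finRange (m + 1)).reverse).map q.2.2} := by
    ext p
    simp only [Set.mem_setOf_eq, Set.mem_preimage]
    rw [htr p.1, htr p.2]
  rw [hset]
  apply (isClosed_discrete _).preimage
  apply Continuous.prodMk
  · exact (continuous_apply m).comp (continuous_subtype_val.comp continuous_fst)
  apply Continuous.prodMk
  · exact continuous_pi fun i =>
      (continuous_apply (i : ℕ)).comp (continuous_subtype_val.comp continuous_fst)
  · exact continuous_pi fun i =>
      (continuous_apply (i : ℕ)).comp (continuous_subtype_val.comp continuous_snd)

/-- asymptotic equivalence is a closed equivalence relation on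
`E^{-∞}` and the limit space is compact and metrizable. -/
theorem limitSpace_compact_metrizable
    [Fintype V] [Fintype E] [TopologicalSpace E] [DiscreteTopology E]
    (rE sE : E → V) (A : SSA V E rE sE) (hA : A.Contracting) :
    Equivalence A.AsympEq ∧
    IsClosed {p : LeftPath rE sE × LeftPath rE sE | A.AsympEq p.1 p.2} ∧
    CompactSpace (Quot A.AsympEq) ∧
    TopologicalSpace.MetrizableSpace (Quot A.AsympEq) := by
  classical
  -- ## Part 1: equivalence relation
  have hequiv : Equivalence A.AsympEq := by
    constructor
    · intro x
      refine ⟨fun m => A.unit (rE (x.1 m)), ?_, fun m => A.d_unit _,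
        fun m => A.act_unit _ _ (fromV_trunc x m)⟩
      apply Set.Finite.subset (Set.finite_range A.unit)
      rintro k ⟨m, rfl⟩; exact ⟨_, rfl⟩
    · rintro x y ⟨g, hgfin, hgd, hgact⟩
      have hFx : ∀ m, FromV rE sE (A.d (g m)) (x.trunc (m + 1)) := fun m => by
        rw [hgd m]; exact fromV_trunc x m
      have hc : ∀ m, A.c (g m) = rE (y.1 m) := fun m =>
        cg_eq A x y m (g m) (hgd m) (hgact m)
      refine ⟨fun m => A.inv (g m), ?_, fun m => by rw [A.d_inv, hc m], ?_⟩
      · apply Set.Finite.subset (hgfin.image A.inv)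
        rintro k ⟨m, rfl⟩; exact ⟨g m, ⟨m, rfl⟩, rfl⟩
      · intro m
        have hmul := A.act_mul (g m) (A.inv (g m)) (x.trunc (m + 1))
          (A.d_inv (g m)) (hFx m)
        rw [← hgact m, ← hmul, A.inv_mul, A.act_unit _ _ (hFx m)]
    · rintro x y z ⟨g1, h1fin, h1d, h1act⟩ ⟨g2, h2fin, h2d, h2act⟩
      have hc : ∀ m, A.c (g1 m) = rE (y.1 m) := fun m =>
        cg_eq A x y m (g1 m) (h1d m) (h1act m)
      have hdc : ∀ m, A.d (g2 m) = A.c (g1 m) := fun m => by rw [h2d m, hc m]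
      refine ⟨fun m => A.mul (g2 m) (g1 m), ?_,
        fun m => by rw [A.d_mul _ _ (hdc m), h1d m], ?_⟩
      · apply Set.Finite.subset (Set.Finite.image2 A.mul h2fin h1fin)
        rintro k ⟨m, rfl⟩; exact Set.mem_image2_of_mem ⟨m, rfl⟩ ⟨m, rfl⟩
      · intro m
        rw [A.act_mul (g1 m) (g2 m) _ (hdc m)
          (by rw [h1d m]; exact fromV_trunc x m), h1act m, h2act m]
  -- ## Setting up the finite set T of germs
  obtain ⟨F, hFfin, hFcore⟩ := hA
  choose n hn using hFcore
  set R1 : Set A.G :=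
    {k | ∃ f ∈ F, ∃ e : E, FromV rE sE (A.d f) [e] ∧ A.res f [e] = k} with hR1
  have hR1fin : R1.Finite := by
    apply Set.Finite.subset
      (Set.Finite.image2 (fun f e => A.res f [e]) hFfin
        (Set.finite_univ (α := E)))
    rintro k ⟨f, hf, e, _, rfl⟩
    exact Set.mem_image2_of_mem hf (Set.mem_univ e)
  set F2 := F ∪ R1 with hF2
  have hF2fin : F2.Finite := hFfin.union hR1fin
  set N : ℕ := hF2fin.toFinset.sup n + 1 with hN
  have hN1 : 1 ≤ N := by rw [hN]; exact Nat.le_add_left 1 _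
  have hNn : ∀ h ∈ F2, n h < N := fun h hh => by
    rw [hN]; exact Nat.lt_succ_of_le (Finset.le_sup (hF2fin.mem_toFinset.mpr hh))
  set T : Set A.G :=
    {k | ∃ h ∈ F2, ∃ l, FromV rE sE (A.d h) l ∧ l.length ≤ N ∧ A.res h l = k} with hT
  have hTfin : T.Finite := by
    apply Set.Finite.subset (Set.Finite.image2 A.res hF2fin (List.finite_length_le E N))
    rintro k ⟨h, hh, l, _, hl, rfl⟩
    exact Set.mem_image2_of_mem hh hl
  -- ## Key reformulation of asymptotic equivalence
  have hiff : ∀ x y : LeftPath rE sE, A.AsympEq x y ↔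
      (∀ m : ℕ, ∃ h ∈ T, A.d h = rE (x.1 m) ∧
        A.act h (x.trunc (m + 1)) = y.trunc (m + 1)) := by
    intro x y
    constructor
    · rintro ⟨g, hgfin, hgd, hgact⟩ m
      set NS := hgfin.toFinset.sup n with hNS
      have hleNS : n (g (m + NS)) ≤ NS :=
        Finset.le_sup (hgfin.mem_toFinset.mpr ⟨m + NS, rfl⟩)
      obtain ⟨l, hl1, hl2, hl3, hl4⟩ :=
        descend A x y m NS (g (m + NS)) (hgd (m + NS)) (hgact (m + NS))
      obtain ⟨f, hfF, l₂, G1, G2, G3⟩ :=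
        res_reach A F n hn (g (m + NS)) l hl1 (by rw [hl2]; exact hleNS)
      obtain ⟨h', H1, l'', H2, H3, H4⟩ :=
        restr_mem A F n hn F2 Set.subset_union_left
          (fun f hf e he => Set.mem_union_right _ ⟨f, hf, e, he, rfl⟩)
          N hN1 hNn l₂.length f (Set.mem_union_left _ hfF) l₂ G1 rfl
      exact ⟨A.res (g (m + NS)) l, ⟨h', H1, l'', H2, H3, by rw [H4, G3]⟩, hl3, hl4⟩
    · intro hR
      choose h hhT hhd hhact using hR
      refine ⟨h, hTfin.subset ?_, hhd, hhact⟩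
      rintro k ⟨m, rfl⟩; exact hhT m
  -- ## Part 2: the relation is closed
  have hRclosed : IsClosed {p : LeftPath rE sE × LeftPath rE sE | A.AsympEq p.1 p.2} := by
    have hset : {p : LeftPath rE sE × LeftPath rE sE | A.AsympEq p.1 p.2} =
        ⋂ m : ℕ, ⋃ h ∈ T, {p : LeftPath rE sE × LeftPath rE sE |
          A.d h = rE (p.1.1 m) ∧ A.act h (p.1.trunc (m + 1)) = p.2.trunc (m + 1)} := by
      ext p
      simp only [Set.mem_setOf_eq, Set.mem_iInter, Set.mem_iUnion, exists_prop]
      exact hiff p.1 p.2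
    rw [hset]
    exact isClosed_iInter fun m =>
      hTfin.isClosed_biUnion fun h _ => isClosed_level A m h
  -- ## Compactness and separation instances on the path space
  haveI hcP : CompactSpace (LeftPath rE sE) := by
    have hcl : IsClosed {x : ℕ → E | ∀ k, sE (x (k + 1)) = rE (x k)} := by
      have : {x : ℕ → E | ∀ k, sE (x (k + 1)) = rE (x k)} =
          ⋂ k : ℕ, (fun x : ℕ → E => (x (k + 1), x k)) ⁻¹'
            {q : E × E | sE q.1 = rE q.2} := by
        ext x; simp
      rw [this]
      exact isClosed_iInter fun k =>
        (isClosed_discrete _).preimage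
          ((continuous_apply (k + 1)).prodMk (continuous_apply k))
    exact isCompact_iff_compactSpace.mp hcl.isCompact
  haveI hT2P : T2Space (LeftPath rE sE) :=
    inferInstanceAs (T2Space {x : ℕ → E // ∀ k, sE (x (k + 1)) = rE (x k)})
  haveI hscP : SecondCountableTopology (LeftPath rE sE) :=
    Topology.IsInducing.secondCountableTopology
      (Topology.IsInducing.subtypeVal :
        Topology.IsInducing
          (Subtype.val : {x : ℕ → E // ∀ k, sE (x (k + 1)) = rE (x k)} → (ℕ → E)))
  -- quotient basics
  have quoteq : ∀ a b : LeftPath rE sE,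
      Quot.mk A.AsympEq a = Quot.mk A.AsympEq b ↔ A.AsympEq a b := fun a b =>
    ⟨fun H => hequiv.eqvGen_iff.mp (Quot.eqvGen_exact H), Quot.sound⟩
  have hfib : ∀ x₀ : LeftPath rE sE,
      IsClosed {x : LeftPath rE sE | Quot.mk A.AsympEq x = Quot.mk A.AsympEq x₀} := by
    intro x₀
    have : {x : LeftPath rE sE | Quot.mk A.AsympEq x = Quot.mk A.AsympEq x₀} =
        (fun x : LeftPath rE sE => (x, x₀)) ⁻¹'
          {p : LeftPath rE sE × LeftPath rE sE | A.AsympEq p.1 p.2} := by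
      ext x
      simp only [Set.mem_setOf_eq, Set.mem_preimage]
      exact quoteq x x₀
    rw [this]
    exact hRclosed.preimage (continuous_id.prodMk continuous_const)
  have hclosedmap : IsClosedMap (Quot.mk A.AsympEq) := by
    intro C hC
    rw [← isQuotientMap_quot_mk.isClosed_preimage]
    have : Quot.mk A.AsympEq ⁻¹' (Quot.mk A.AsympEq '' C) =
        Prod.snd '' ({p : LeftPath rE sE × LeftPath rE sE | A.AsympEq p.1 p.2} ∩
          C ×ˢ (Set.univ : Set (LeftPath rE sE))) := by
      ext x
      simp only [Set.mem_preimage, Set.mem_image, Set.mem_inter_iff, Set.mem_prod,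
        Set.mem_setOf_eq, Set.mem_univ, and_true]
      constructor
      · rintro ⟨c, hcC, hce⟩
        exact ⟨(c, x), ⟨(quoteq c x).mp hce, hcC⟩, rfl⟩
      · rintro ⟨⟨c, x'⟩, ⟨hA', hcC⟩, rfl⟩
        exact ⟨c, hcC, (quoteq c _).mpr hA'⟩
    rw [this]
    exact ((hRclosed.inter (hC.prod isClosed_univ)).isCompact.image continuous_snd).isClosed
  -- ## Hausdorffness of the quotient
  haveI hT2Q : T2Space (Quot A.AsympEq) := by
    refine ⟨fun a b hab => ?_⟩
    obtain ⟨x₀, rfl⟩ := Quot.exists_rep a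
    obtain ⟨y₀, rfl⟩ := Quot.exists_rep b
    have hdisj : Disjoint
        {x : LeftPath rE sE | Quot.mk A.AsympEq x = Quot.mk A.AsympEq x₀}
        {x : LeftPath rE sE | Quot.mk A.AsympEq x = Quot.mk A.AsympEq y₀} := by
      rw [Set.disjoint_left]
      intro w hwa hwb
      exact hab ((hwa : _ = _).symm.trans hwb)
    obtain ⟨U, Vv, hUo, hVo, hKaU, hKbV, hUV⟩ :=
      SeparatedNhds.of_isCompact_isCompact ((hfib x₀).isCompact) ((hfib y₀).isCompact) hdisj
    refine ⟨(Quot.mk A.AsympEq '' Uᶜ)ᶜ, (Quot.mk A.AsympEq '' Vvᶜ)ᶜ,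
      (hclosedmap _ hUo.isClosed_compl).isOpen_compl,
      (hclosedmap _ hVo.isClosed_compl).isOpen_compl, ?_, ?_, ?_⟩
    · rintro ⟨w, hwU, hw⟩
      exact hwU (hKaU hw)
    · rintro ⟨w, hwV, hw⟩
      exact hwV (hKbV hw)
    · rw [Set.disjoint_left]
      rintro z hz1 hz2
      obtain ⟨w, rfl⟩ := Quot.exists_rep z
      have hwU : w ∈ U := by
        by_contra hw; exact hz1 ⟨w, hw, rfl⟩
      have hwV : w ∈ Vv := by
        by_contra hw; exact hz2 ⟨w, hw, rfl⟩
      exact Set.disjoint_left.mp hUV hwU hwV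
  -- ## Second countability of the quotient
  haveI hscQ : SecondCountableTopology (Quot A.AsympEq) := by
    obtain ⟨b, hbc, -, hb⟩ := TopologicalSpace.exists_countable_basis (LeftPath rE sE)
    have hSbasis : TopologicalSpace.IsTopologicalBasis
        ((fun t : Set (Set (LeftPath rE sE)) => (Quot.mk A.AsympEq '' (⋃₀ t)ᶜ)ᶜ) ''
          {t | t.Finite ∧ t ⊆ b}) := by
      apply TopologicalSpace.isTopologicalBasis_of_isOpen_of_nhds
      · rintro _ ⟨t, ⟨htf, htb⟩, rfl⟩
        exact (hclosedmap _
          (isOpen_sUnion fun u hu => hb.isOpen (htb hu)).isClosed_compl).isOpen_compl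
      · intro y W hyW hWopen
        obtain ⟨x₀, rfl⟩ := Quot.exists_rep y
        have hKcpt : IsCompact
            {x : LeftPath rE sE | Quot.mk A.AsympEq x = Quot.mk A.AsympEq x₀} :=
          (hfib x₀).isCompact
        have hWopen' : IsOpen (Quot.mk A.AsympEq ⁻¹' W) :=
          hWopen.preimage continuous_quot_mk
        have hKsub : {x : LeftPath rE sE | Quot.mk A.AsympEq x = Quot.mk A.AsympEq x₀} ⊆
            Quot.mk A.AsympEq ⁻¹' W := by
          intro x hx
          simp only [Set.mem_preimage]
          rw [show Quot.mk A.AsympEq x = Quot.mk A.AsympEq x₀ from hx]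
          exact hyW
        have hcover : {x : LeftPath rE sE |
              Quot.mk A.AsympEq x = Quot.mk A.AsympEq x₀} ⊆
            ⋃ u : {u : Set (LeftPath rE sE) // u ∈ b ∧ u ⊆ Quot.mk A.AsympEq ⁻¹' W},
              u.1 := by
          intro x hx
          obtain ⟨u, hub, hxu, huW⟩ := hb.exists_subset_of_mem_open (hKsub hx) hWopen'
          exact Set.mem_iUnion.mpr ⟨⟨u, hub, huW⟩, hxu⟩
        obtain ⟨s, hs⟩ := hKcpt.elim_finite_subcover _ (fun u => hb.isOpen u.2.1) hcover
        refine ⟨(Quot.mk A.AsympEq '' (⋃₀ ((fun u : {u : Set (LeftPath rE sE) //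
            u ∈ b ∧ u ⊆ Quot.mk A.AsympEq ⁻¹' W} => u.1) '' ↑s))ᶜ)ᶜ,
          ⟨_, ⟨s.finite_toSet.image _, ?_⟩, rfl⟩, ?_, ?_⟩
        · rintro _ ⟨u, -, rfl⟩
          exact u.2.1
        · rintro ⟨w, hw1, hw2⟩
          apply hw1
          obtain ⟨i, his, hwi⟩ := Set.mem_iUnion₂.mp (hs hw2)
          exact Set.mem_sUnion.mpr ⟨i.1, ⟨i, Finset.mem_coe.mpr his, rfl⟩, hwi⟩
        · intro z hz
          obtain ⟨w, rfl⟩ := Quot.exists_rep z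
          have hwU : w ∈ ⋃₀ ((fun u : {u : Set (LeftPath rE sE) //
              u ∈ b ∧ u ⊆ Quot.mk A.AsympEq ⁻¹' W} => u.1) '' ↑s) := by
            by_contra hw
            exact hz ⟨w, hw, rfl⟩
          obtain ⟨t, ⟨u, hus, rfl⟩, hwt⟩ := hwU
          exact u.2.2 hwt
    exact hSbasis.secondCountableTopology
      ((Set.countable_setOf_finite_subset hbc).image _)
  exact ⟨hequiv, hRclosed, inferInstance, inferInstance⟩

end SSG
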